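/- Let Δ ≥ 4 be an integer and define F(i,j) = (4Δ−6)(1/i + 1/j) + Δ² − 6Δ + 3 + 6/Δ − (i−j)². Then for every integer i with ⌊(Δ+3)/2⌋ + 1 ≤ i ≤ Δ−1, one has the strict inequality i·F(i,2) > F(Δ,Δ), where F(Δ,Δ) = 2(4Δ−6)/Δ + Δ² − 6Δ + 3 + 6/Δ. -/
import Mathlib


/-- The dual slack function (symmetric in `i` and `j`). -/
noncomputable def F (Δ i j : ℕ) : ℝ :=
  (4 * (Δ : ℝ) - 6) * (1 / (i : ℝ) + 1 / (j : ℝ))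
    + (Δ : ℝ) ^ 2 - 6 * (Δ : ℝ) + 3 + 6 / (Δ : ℝ) - ((i : ℝ) - (j : ℝ)) ^ 2

/-- For `⌊(Δ+3)/2⌋ + 1 ≤ i ≤ Δ−1` one has `i·F(i,2) > F(Δ,Δ)`,
where `F(Δ,Δ) = 2(4Δ−6)/Δ + Δ² − 6Δ + 3 + 6/Δ`. -/
theorem i_mul_F_i_two_gt (Δ : ℕ) (hΔ : 4 ≤ Δ) (i : ℕ)
    (hit : (Δ + 3) / 2 + 1 ≤ i) (hiΔ : i ≤ Δ - 1) :
    (i : ℝ) * F Δ i 2 > F Δ Δ Δ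
      ∧ F Δ Δ Δ = 2 * (4 * (Δ : ℝ) - 6) / (Δ : ℝ)
          + (Δ : ℝ) ^ 2 - 6 * (Δ : ℝ) + 3 + 6 / (Δ : ℝ) := by
  have h6 : 6 ≤ Δ := by omega
  have h2i : Δ + 4 ≤ 2 * i := by omega
  have hle : i + 1 ≤ Δ := by omega
  have hi5 : 5 ≤ i := by omega
  have hD6 : (6 : ℝ) ≤ (Δ : ℝ) := by exact_mod_cast h6
  have hx5 : (5 : ℝ) ≤ (i : ℝ) := by exact_mod_cast hi5
  have h2x : (Δ : ℝ) + 4 ≤ 2 * (i : ℝ) := by exact_mod_cast h2i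
  have hxD : (i : ℝ) + 1 ≤ (Δ : ℝ) := by exact_mod_cast hle
  set D : ℝ := (Δ : ℝ) with hD
  set x : ℝ := (i : ℝ) with hx
  have hD0 : D > 0 := by linarith
  have hx0 : x > 0 := by linarith
  constructor
  · rw [gt_iff_lt, ← sub_pos]
    have hpos : 0 < D * (x * F Δ i 2 - F Δ Δ Δ) := by
      have key : D * (x * F Δ i 2 - F Δ Δ Δ)
          = -D * x ^ 3 + 4 * D * x ^ 2 + (D ^ 3 - 4 * D ^ 2 - 4 * D + 6) * x
            - D ^ 3 + 10 * D ^ 2 - 17 * D + 6 := by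
        simp only [F, ← hD, ← hx]
        field_simp
        ring
      rw [key]
      nlinarith [mul_nonneg (mul_nonneg hD0.le (by linarith : (0:ℝ) ≤ 2 * x - D - 4))
          (by linarith : (0:ℝ) ≤ D - 1 - x),
        mul_nonneg (mul_nonneg hx0.le (by linarith : (0:ℝ) ≤ 2 * x - D - 4))
          (by linarith : (0:ℝ) ≤ D - 1 - x),
        mul_pos hD0 hx0, sq_nonneg (D - x), sq_nonneg (2 * x - D - 4), sq_nonneg (D - 1 - x)]
    nlinarith [hpos, hD0]
  · simp only [F, ← hD]
    field_simp
    ring
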